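/- The recursive contraction algorithm is correct: for any tensor network N and any contraction tree T for N (a rooted binary tree whose leaves are exactly the tensors of N), recursively contracting according to T—returning the single tensor when |N| = 1, and otherwise contracting the results of the two immediate subtrees—yields the contraction of N. -/

import Mathlib

open scoped Classical

noncomputable section

/-- A tensor over a finite set of indices `idx`, with domains `D i` for each index.
Values are given as a function of total assignments, depending only on `idx`. -/
structure Tensor (Ind : Type) (D : Ind → Type) where
  idx : Finset Ind
  val : (∀ i, D i) → ℝ
  depends : ∀ σ τ : (∀ i, D i), (∀ i ∈ idx, σ i = τ i) → val σ = val τ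

namespace Tensor

variable {Ind : Type} {D : Ind → Type} [∀ i, Fintype (D i)]

/-- Override a total assignment `σ` on the indices in `I` using `ρ`. -/
def override (σ : ∀ i, D i) {I : Finset Ind} (ρ : ∀ i : I, D i) : ∀ i, D i :=
  fun i => if h : i ∈ I then ρ ⟨i, h⟩ else σ i

/-- Number of tensors of the network `A` in which index `i` appears. -/
def count {κ : Type} [Fintype κ] (A : κ → Tensor Ind D) (i : Ind) : ℕ :=
  (Finset.univ.filter fun k => i ∈ (A k).idx).card

/-- A family of tensors is a tensor network if no index appears more than twice. -/
def IsNetwork {κ : Type} [Fintype κ] (A : κ → Tensor Ind D) : Prop :=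
  ∀ i, count A i ≤ 2

/-- Bond indices: appearing in exactly two tensors. -/
def bonds {κ : Type} [Fintype κ] (A : κ → Tensor Ind D) : Finset Ind :=
  (Finset.univ.biUnion fun k => (A k).idx).filter fun i => count A i = 2

/-- Free indices: appearing in exactly one tensor. -/
def frees {κ : Type} [Fintype κ] (A : κ → Tensor Ind D) : Finset Ind :=
  (Finset.univ.biUnion fun k => (A k).idx).filter fun i => count A i = 1

/-- The contraction of a tensor network, as a function of total assignments
(its value depends only on the free indices): sum over all assignments of the
bond indices of the product of the tensor entries. -/
def contract {κ : Type} [Fintype κ] (A : κ → Tensor Ind D) (σ : ∀ i, D i) : ℝ :=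
  ∑ ρ : ∀ i : (bonds A : Finset Ind), D i, ∏ k, (A k).val (override σ ρ)

end Tensor

/-- The binary contraction `A · B` of two tensors: indices are the symmetric
difference of the index sets, values sum over assignments of the shared indices. -/
def Tensor.binContract {Ind : Type} {D : Ind → Type} [∀ i, Fintype (D i)]
    (A B : Tensor Ind D) : Tensor Ind D where
  idx := (A.idx \ B.idx) ∪ (B.idx \ A.idx)
  val σ := ∑ ρ : ∀ i : (A.idx ∩ B.idx : Finset Ind), D i,
      A.val (Tensor.override σ ρ) * B.val (Tensor.override σ ρ)
  depends σ τ h := by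
    refine Finset.sum_congr rfl fun ρ _ => ?_
    have hA : A.val (Tensor.override σ ρ) = A.val (Tensor.override τ ρ) := by
      refine A.depends _ _ fun i hi => ?_
      unfold Tensor.override
      by_cases hI : i ∈ A.idx ∩ B.idx
      · simp [hI]
      · simp only [dif_neg hI]
        exact h i (Finset.mem_union.mpr (Or.inl (Finset.mem_sdiff.mpr
          ⟨hi, fun hB => hI (Finset.mem_inter.mpr ⟨hi, hB⟩)⟩)))
    have hB : B.val (Tensor.override σ ρ) = B.val (Tensor.override τ ρ) := by
      refine B.depends _ _ fun i hi => ?_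
      unfold Tensor.override
      by_cases hI : i ∈ A.idx ∩ B.idx
      · simp [hI]
      · simp only [dif_neg hI]
        exact h i (Finset.mem_union.mpr (Or.inr (Finset.mem_sdiff.mpr
          ⟨hi, fun hA' => hI (Finset.mem_inter.mpr ⟨hA', hi⟩)⟩)))
    rw [hA, hB]

/-- A contraction tree: a rooted binary tree whose leaves are tensors. -/
inductive CTree (Ind : Type) (D : Ind → Type) : Type
  | leaf : Tensor Ind D → CTree Ind D
  | node : CTree Ind D → CTree Ind D → CTree Ind D

namespace CTree

variable {Ind : Type} {D : Ind → Type}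

/-- The list of leaf tensors of a contraction tree. -/
def leaves : CTree Ind D → List (Tensor Ind D)
  | .leaf A => [A]
  | .node l r => l.leaves ++ r.leaves

/-- Recursive contraction along a contraction tree: a single tensor at a leaf, and the
binary contraction of the results of the two immediate subtrees at a node. -/
def eval [∀ i, Fintype (D i)] : CTree Ind D → Tensor Ind D
  | .leaf A => A
  | .node l r => Tensor.binContract l.eval r.eval

/-- The list of all subtrees of a contraction tree (whose evaluations are exactly the
tensors appearing during the recursive contraction). -/
def subtrees : CTree Ind D → List (CTree Ind D)
  | .leaf A => [.leaf A]
  | .node l r => .node l r :: (l.subtrees ++ r.subtrees)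

/-- The family of leaf tensors of a contraction tree, indexed by leaf position. -/
def leafFamily (T : CTree Ind D) : Fin T.leaves.length → Tensor Ind D :=
  fun k => T.leaves.get k

end CTree

section Helpers

namespace Tensor

variable {Ind : Type} {D : Ind → Type} [∀ i, Fintype (D i)]

lemma count_eq_sum {κ : Type} [Fintype κ] (A : κ → Tensor Ind D) (i : Ind) :
    count A i = ∑ k, if i ∈ (A k).idx then 1 else 0 := by
  classical
  rw [count, Finset.card_filter]

lemma mem_bonds {κ : Type} [Fintype κ] {A : κ → Tensor Ind D} {i : Ind} :
    i ∈ bonds A ↔ count A i = 2 := by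
  constructor
  · exact fun h => (Finset.mem_filter.mp h).2
  · intro h
    refine Finset.mem_filter.mpr ⟨?_, h⟩
    have hne : (Finset.univ.filter fun k => i ∈ (A k).idx).Nonempty := by
      rw [← Finset.card_pos]; unfold count at h; omega
    obtain ⟨k, hk⟩ := hne
    exact Finset.mem_biUnion.mpr ⟨k, Finset.mem_univ k, (Finset.mem_filter.mp hk).2⟩

lemma mem_frees {κ : Type} [Fintype κ] {A : κ → Tensor Ind D} {i : Ind} :
    i ∈ frees A ↔ count A i = 1 := by
  constructor
  · exact fun h => (Finset.mem_filter.mp h).2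
  · intro h
    refine Finset.mem_filter.mpr ⟨?_, h⟩
    have hne : (Finset.univ.filter fun k => i ∈ (A k).idx).Nonempty := by
      rw [← Finset.card_pos]; unfold count at h; omega
    obtain ⟨k, hk⟩ := hne
    exact Finset.mem_biUnion.mpr ⟨k, Finset.mem_univ k, (Finset.mem_filter.mp hk).2⟩

lemma count_sum_elim {κ₁ κ₂ : Type} [Fintype κ₁] [Fintype κ₂]
    (A₁ : κ₁ → Tensor Ind D) (A₂ : κ₂ → Tensor Ind D) (i : Ind) :
    count (Sum.elim A₁ A₂) i = count A₁ i + count A₂ i := by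
  rw [count_eq_sum, count_eq_sum, count_eq_sum, Fintype.sum_sum_type]
  simp only [Sum.elim_inl, Sum.elim_inr]
  rfl

lemma one_le_count {κ : Type} [Fintype κ] {A : κ → Tensor Ind D} {i : Ind} {k : κ}
    (h : i ∈ (A k).idx) : 1 ≤ count A i := by
  rw [count]
  exact Finset.card_pos.mpr ⟨k, Finset.mem_filter.mpr ⟨Finset.mem_univ k, h⟩⟩

lemma count_comp_equiv {κ κ' : Type} [Fintype κ] [Fintype κ'] (e : κ' ≃ κ)
    (A : κ → Tensor Ind D) (i : Ind) : count (A ∘ e) i = count A i := by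
  rw [count_eq_sum, count_eq_sum]
  exact Equiv.sum_comp e fun k => if i ∈ (A k).idx then 1 else 0

lemma bonds_comp_equiv {κ κ' : Type} [Fintype κ] [Fintype κ'] (e : κ' ≃ κ)
    (A : κ → Tensor Ind D) : bonds (A ∘ e) = bonds A := by
  ext i; rw [mem_bonds, mem_bonds, count_comp_equiv]

lemma frees_comp_equiv {κ κ' : Type} [Fintype κ] [Fintype κ'] (e : κ' ≃ κ)
    (A : κ → Tensor Ind D) : frees (A ∘ e) = frees A := by
  ext i; rw [mem_frees, mem_frees, count_comp_equiv]

lemma isNetwork_comp_equiv {κ κ' : Type} [Fintype κ] [Fintype κ'] (e : κ' ≃ κ)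
    (A : κ → Tensor Ind D) : IsNetwork (A ∘ e) ↔ IsNetwork A := by
  unfold IsNetwork
  constructor
  · intro h i; rw [← count_comp_equiv e]; exact h i
  · intro h i; rw [count_comp_equiv e]; exact h i

lemma contract_comp_equiv {κ κ' : Type} [Fintype κ] [Fintype κ'] (e : κ' ≃ κ)
    (A : κ → Tensor Ind D) (σ : ∀ i, D i) : contract (A ∘ e) σ = contract A σ := by
  unfold contract
  rw [bonds_comp_equiv]
  exact Finset.sum_congr rfl fun ρ _ => Equiv.prod_comp e fun k => (A k).val (override σ ρ)

/-- Split an assignment on a disjoint union of finsets. -/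
def piSplit {s t : Finset Ind} (hst : Disjoint s t) :
    (∀ i : (s ∪ t : Finset Ind), D i) ≃ (∀ i : (s : Finset Ind), D i) × (∀ i : (t : Finset Ind), D i) where
  toFun ρ := (fun i => ρ ⟨i.1, Finset.mem_union_left _ i.2⟩,
              fun i => ρ ⟨i.1, Finset.mem_union_right _ i.2⟩)
  invFun p := fun i => if h : (i : Ind) ∈ s then p.1 ⟨i, h⟩ else
    p.2 ⟨i, (Finset.mem_union.mp i.2).resolve_left h⟩
  left_inv ρ := funext fun i => by
    by_cases h : (i : Ind) ∈ s
    · exact dif_pos h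
    · exact dif_neg h
  right_inv p := by
    refine Prod.ext (funext fun i => ?_) (funext fun i => ?_)
    · exact dif_pos i.2
    · exact dif_neg (Finset.disjoint_right.mp hst i.2)

end Tensor

end Helpers

section Split

namespace Tensor

variable {Ind : Type} {D : Ind → Type} [∀ i, Fintype (D i)]

lemma override_mem (σ : ∀ i, D i) {I : Finset Ind} (ρ : ∀ i : I, D i) {i : Ind}
    (h : i ∈ I) : override σ ρ i = ρ ⟨i, h⟩ := dif_pos h

lemma override_notMem (σ : ∀ i, D i) {I : Finset Ind} (ρ : ∀ i : I, D i) {i : Ind}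
    (h : i ∉ I) : override σ ρ i = σ i := dif_neg h

lemma sum_piSplit {s t : Finset Ind} (hst : Disjoint s t)
    (f : (∀ i : (s ∪ t : Finset Ind), D i) → ℝ) :
    ∑ ρ, f ρ = ∑ ρ₁ : ∀ i : (s : Finset Ind), D i, ∑ ρ₂ : ∀ i : (t : Finset Ind), D i,
      f ((piSplit hst).symm (ρ₁, ρ₂)) := by
  rw [← Equiv.sum_comp (piSplit hst).symm f, Fintype.sum_prod_type]

lemma override_piSplit_symm (σ : ∀ i, D i) {s t : Finset Ind} (hst : Disjoint s t)
    (ρ₁ : ∀ i : (s : Finset Ind), D i) (ρ₂ : ∀ i : (t : Finset Ind), D i) :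
    override σ ((piSplit hst).symm (ρ₁, ρ₂)) = override (override σ ρ₂) ρ₁ := by
  funext i
  by_cases h1 : i ∈ s
  · rw [override_mem σ _ (Finset.mem_union_left t h1), override_mem _ _ h1]
    exact dif_pos h1
  · by_cases h2 : i ∈ t
    · rw [override_mem σ _ (Finset.mem_union_right s h2), override_notMem _ _ h1,
        override_mem _ _ h2]
      exact dif_neg h1
    · rw [override_notMem σ _ (by simp [Finset.mem_union, h1, h2]),
        override_notMem _ _ h1, override_notMem _ _ h2]

theorem split_contract {κ₁ κ₂ : Type} [Fintype κ₁] [Fintype κ₂]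
    (A₁ : κ₁ → Tensor Ind D) (A₂ : κ₂ → Tensor Ind D)
    (hnet : IsNetwork (Sum.elim A₁ A₂)) :
    frees (Sum.elim A₁ A₂) = (frees A₁ \ frees A₂) ∪ (frees A₂ \ frees A₁)
    ∧ ∀ σ : ∀ i, D i, contract (Sum.elim A₁ A₂) σ
        = ∑ ρ : ∀ i : (frees A₁ ∩ frees A₂ : Finset Ind), D i,
            contract A₁ (override σ ρ) * contract A₂ (override σ ρ) := by
  have hcnt : ∀ i, count A₁ i + count A₂ i ≤ 2 := fun i => by
    rw [← count_sum_elim]; exact hnet i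
  have hF : frees (Sum.elim A₁ A₂) = (frees A₁ \ frees A₂) ∪ (frees A₂ \ frees A₁) := by
    ext i
    have := hcnt i
    simp only [Finset.mem_union, Finset.mem_sdiff, mem_frees, count_sum_elim]
    omega
  have hB : bonds (Sum.elim A₁ A₂) = (bonds A₁ ∪ bonds A₂) ∪ (frees A₁ ∩ frees A₂) := by
    ext i
    have := hcnt i
    simp only [Finset.mem_union, Finset.mem_inter, mem_bonds, mem_frees, count_sum_elim]
    omega
  have hd12 : Disjoint (bonds A₁) (bonds A₂) := Finset.disjoint_left.mpr fun {i} h1 h2 => by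
    have := hcnt i; rw [mem_bonds] at h1 h2; omega
  have hdS : Disjoint (bonds A₁ ∪ bonds A₂) (frees A₁ ∩ frees A₂) :=
    Finset.disjoint_left.mpr fun {i} h1 h2 => by
      have := hcnt i
      rw [Finset.mem_union, mem_bonds, mem_bonds] at h1
      rw [Finset.mem_inter, mem_frees, mem_frees] at h2
      omega
  refine ⟨hF, fun σ => ?_⟩
  unfold contract
  rw [hB, sum_piSplit hdS, Finset.sum_comm]
  refine Finset.sum_congr rfl fun ρS _ => ?_
  rw [sum_piSplit hd12, Finset.sum_mul_sum]
  refine Finset.sum_congr rfl fun ρ₁ _ => Finset.sum_congr rfl fun ρ₂ _ => ?_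
  rw [override_piSplit_symm, override_piSplit_symm, Fintype.prod_sum_type]
  simp only [Sum.elim_inl, Sum.elim_inr]
  congr 1
  · refine Finset.prod_congr rfl fun k _ => (A₁ k).depends _ _ fun i hi => ?_
    have hc1 : 1 ≤ count A₁ i := one_le_count hi
    have hnb2 : i ∉ bonds A₂ := fun h => by
      rw [mem_bonds] at h; have := hcnt i; omega
    by_cases h1 : i ∈ bonds A₁
    · rw [override_mem _ _ h1, override_mem _ _ h1]
    · rw [override_notMem _ _ h1, override_notMem _ _ h1, override_notMem _ _ hnb2]
  · refine Finset.prod_congr rfl fun k _ => (A₂ k).depends _ _ fun i hi => ?_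
    have hc2 : 1 ≤ count A₂ i := one_le_count hi
    have hnb1 : i ∉ bonds A₁ := fun h => by
      rw [mem_bonds] at h; have := hcnt i; omega
    rw [override_notMem _ _ hnb1]

end Tensor

end Split

section Main

variable {Ind : Type} {D : Ind → Type} [∀ i, Fintype (D i)]

lemma CTree.leafFamily_leaf (A : Tensor Ind D) :
    (CTree.leaf A).leafFamily = fun _ => A := by
  funext k
  rcases k with ⟨n, hn⟩
  simp only [CTree.leaves, List.length_singleton, Nat.lt_one_iff] at hn
  subst hn
  rfl

lemma CTree.length_node (l r : CTree Ind D) :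
    (CTree.node l r).leaves.length = l.leaves.length + r.leaves.length := by
  simp [CTree.leaves]

/-- Reindexing equivalence for the leaves of a node. -/
def CTree.nodeEquiv (l r : CTree Ind D) :
    Fin l.leaves.length ⊕ Fin r.leaves.length ≃ Fin (CTree.node l r).leaves.length :=
  finSumFinEquiv.trans (finCongr (CTree.length_node l r).symm)

lemma CTree.leafFamily_node (l r : CTree Ind D) :
    (CTree.node l r).leafFamily ∘ CTree.nodeEquiv l r
      = Sum.elim l.leafFamily r.leafFamily := by
  funext k
  cases k with
  | inl j =>
      show (CTree.node l r).leafFamily (CTree.nodeEquiv l r (Sum.inl j)) = l.leaves.get j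
      simp [CTree.leafFamily, CTree.nodeEquiv, List.get_eq_getElem]
      simp [CTree.leaves, List.getElem_append_left j.isLt]
  | inr j =>
      show (CTree.node l r).leafFamily (CTree.nodeEquiv l r (Sum.inr j)) = r.leaves.get j
      simp [CTree.leafFamily, CTree.nodeEquiv, List.get_eq_getElem]
      simp [CTree.leaves, List.getElem_append_right (Nat.le_add_right l.leaves.length j.1)]

theorem ctree_eval_eq_contract'
    (T : CTree Ind D)
    (hnet : Tensor.IsNetwork T.leafFamily) :
    T.eval.idx = Tensor.frees T.leafFamily
      ∧ ∀ σ : ∀ i, D i, T.eval.val σ = Tensor.contract T.leafFamily σ := by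
  revert hnet
  induction T with
  | leaf A =>
      intro _
      rw [CTree.leafFamily_leaf]
      have hbonds : Tensor.bonds (fun _ : Fin (CTree.leaf A).leaves.length => A) = ∅ := by
        ext i
        rw [Tensor.mem_bonds, Tensor.count_eq_sum]
        by_cases h : i ∈ A.idx <;> simp [h] <;> simp [CTree.leaves]
      have hfrees : Tensor.frees (fun _ : Fin (CTree.leaf A).leaves.length => A) = A.idx := by
        ext i
        rw [Tensor.mem_frees, Tensor.count_eq_sum]
        by_cases h : i ∈ A.idx <;> simp [h] <;> simp [CTree.leaves]
      refine ⟨hfrees.symm, fun σ => ?_⟩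
      show A.val σ = _
      unfold Tensor.contract
      rw [hbonds]
      have hov : ∀ ρ : ∀ i : ((∅ : Finset Ind) : Finset Ind), D i,
          Tensor.override σ ρ = σ := fun ρ =>
        funext fun i => Tensor.override_notMem σ ρ (Finset.notMem_empty i)
      simp [hov]
      simp [CTree.leaves]
  | node l r ihl ihr =>
      intro hnet
      have hAE := CTree.leafFamily_node l r
      have hnet' : Tensor.IsNetwork (Sum.elim l.leafFamily r.leafFamily) := by
        rw [← hAE]
        exact (Tensor.isNetwork_comp_equiv (CTree.nodeEquiv l r) _).mpr hnet
      have hnl : Tensor.IsNetwork l.leafFamily := fun i => by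
        have := hnet' i; rw [Tensor.count_sum_elim] at this; omega
      have hnr : Tensor.IsNetwork r.leafFamily := fun i => by
        have := hnet' i; rw [Tensor.count_sum_elim] at this; omega
      obtain ⟨hidxl, hvall⟩ := ihl hnl
      obtain ⟨hidxr, hvalr⟩ := ihr hnr
      obtain ⟨hfr, hcon⟩ := Tensor.split_contract l.leafFamily r.leafFamily hnet'
      have hfrees : Tensor.frees (Sum.elim l.leafFamily r.leafFamily)
          = Tensor.frees (CTree.node l r).leafFamily := by
        rw [← hAE, Tensor.frees_comp_equiv]
      have hcontr : ∀ σ, Tensor.contract (Sum.elim l.leafFamily r.leafFamily) σ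
          = Tensor.contract (CTree.node l r).leafFamily σ := fun σ => by
        rw [← hAE, Tensor.contract_comp_equiv]
      constructor
      · show (Tensor.binContract l.eval r.eval).idx = _
        simp only [Tensor.binContract]
        rw [hidxl, hidxr, ← hfr, hfrees]
      · intro σ
        show (Tensor.binContract l.eval r.eval).val σ = _
        simp only [Tensor.binContract]
        rw [hidxl, hidxr, ← hcontr σ, hcon σ]
        simp only [hvall, hvalr]

end Main

/-- correctness of the recursive contraction algorithm.  For any tensor
network `N` and contraction tree `T` for `N` (a rooted binary tree whose leaves are the
tensors of `N`), recursively contracting according to `T` yields the contraction of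
`N`: the resulting tensor has indices the free indices of `N` and values the
contraction of `N`. -/
theorem ctree_eval_eq_contract
    {Ind : Type} {D : Ind → Type} [∀ i, Fintype (D i)]
    (T : CTree Ind D)
    (hnet : Tensor.IsNetwork T.leafFamily) :
    T.eval.idx = Tensor.frees T.leafFamily
      ∧ ∀ σ : ∀ i, D i, T.eval.val σ = Tensor.contract T.leafFamily σ := by
  exact ctree_eval_eq_contract' T hnet
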